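/- Let Â_1, …, Â_K and A_1, …, A_K be matrices with Â_j, A_j of size p_j × r_j, and let H_1, …, H_K be r_j × r_j matrices with ‖H_j‖_F ≤ C and ‖A_j‖_F² ≤ C p_j and ‖Â_j‖_F² ≤ C p_j for all j and some constant C ≥ 1. Fix k and define B̂ = ⊗_{j ≠ k} Â_j (Kronecker product over all j ≠ k in decreasing order of index), B = ⊗_{j ≠ k} A_j, H_{−k} = ⊗_{j ≠ k} H_j, and p_{−k} = Π_{j ≠ k} p_j. Then there is a constant C' depending only on K and C such that (1/p_{−k}) ‖B̂ − B H_{−k}‖_F² ≤ C' Σ_{j ≠ k} (1/p_j) ‖Â_j − A_j H_j‖_F². -/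

import Mathlib

open Matrix BigOperators

/-- Squared Frobenius norm. -/
noncomputable def frob2 {m n : Type*} [Fintype m] [Fintype n] (M : Matrix m n ℝ) : ℝ :=
  ∑ i, ∑ j, (M i j) ^ 2

/-- Frobenius norm. -/
noncomputable def frobNorm {m n : Type*} [Fintype m] [Fintype n] (M : Matrix m n ℝ) : ℝ :=
  Real.sqrt (frob2 M)

/-- Kronecker product of a finite family of matrices (entries are products of entries). -/
def kronFamily {m : ℕ} {p r : Fin m → ℕ}
    (A : ∀ j, Matrix (Fin (p j)) (Fin (r j)) ℝ) :
    Matrix (∀ j, Fin (p j)) (∀ j, Fin (r j)) ℝ :=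
  Matrix.of fun i c => ∏ j, A j (i j) (c j)

open Finset
lemma frob2_nonneg {m n : Type*} [Fintype m] [Fintype n] (M : Matrix m n ℝ) : 0 ≤ frob2 M :=
  Finset.sum_nonneg fun _ _ => Finset.sum_nonneg fun _ _ => sq_nonneg _

lemma sum_pi_prod {m : ℕ} {p : Fin m → ℕ} (f : ∀ j, Fin (p j) → ℝ) :
    ∑ x : ∀ j, Fin (p j), ∏ j, f j (x j) = ∏ j, ∑ i, f j i := by
  rw [Finset.prod_univ_sum (fun _ => Finset.univ) f, Fintype.piFinset_univ]

lemma frob2_mul_le {a b c : Type*} [Fintype a] [Fintype b] [Fintype c]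
    (M : Matrix a b ℝ) (N : Matrix b c ℝ) : frob2 (M * N) ≤ frob2 M * frob2 N := by
  have h : ∀ i k, ((M * N) i k) ^ 2 ≤ (∑ j, M i j ^ 2) * (∑ j, N j k ^ 2) := by
    intro i k
    rw [Matrix.mul_apply]
    exact Finset.sum_mul_sq_le_sq_mul_sq _ _ _
  calc frob2 (M * N) ≤ ∑ i, ∑ k, (∑ j, M i j ^ 2) * (∑ j, N j k ^ 2) :=
        Finset.sum_le_sum fun i _ => Finset.sum_le_sum fun k _ => h i k
    _ = frob2 M * frob2 N := by
        unfold frob2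
        rw [← Finset.sum_mul_sum]
        congr 1
        rw [Finset.sum_comm]

lemma frob2_kronFamily {m : ℕ} {p r : Fin m → ℕ}
    (A : ∀ j, Matrix (Fin (p j)) (Fin (r j)) ℝ) :
    frob2 (kronFamily A) = ∏ j, frob2 (A j) := by
  unfold frob2 kronFamily
  simp only [Matrix.of_apply]
  have : ∀ i : ∀ j, Fin (p j), ∑ c : ∀ j, Fin (r j), (∏ j, A j (i j) (c j)) ^ 2
      = ∏ j, ∑ b, (A j (i j) b) ^ 2 := by
    intro i
    rw [← sum_pi_prod (fun j b => (A j (i j) b) ^ 2)]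
    congr 1; funext c
    rw [← Finset.prod_pow]
  rw [Finset.sum_congr rfl fun i _ => this i]
  exact sum_pi_prod (fun j a => ∑ b, (A j a b) ^ 2)

lemma kronFamily_mul {m : ℕ} {p r : Fin m → ℕ}
    (A : ∀ j, Matrix (Fin (p j)) (Fin (r j)) ℝ)
    (H : ∀ j, Matrix (Fin (r j)) (Fin (r j)) ℝ) :
    kronFamily A * kronFamily H = kronFamily (fun j => A j * H j) := by
  ext i c
  rw [Matrix.mul_apply]
  unfold kronFamily
  simp only [Matrix.of_apply]
  have : ∀ b : ∀ j, Fin (r j), (∏ j, A j (i j) (b j)) * (∏ j, H j (b j) (c j))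
      = ∏ j, (A j (i j) (b j) * H j (b j) (c j)) := fun b => (Finset.prod_mul_distrib).symm
  rw [Finset.sum_congr rfl fun b _ => this b,
    sum_pi_prod (fun j b => A j (i j) b * H j b (c j))]
  exact Finset.prod_congr rfl fun j _ => (Matrix.mul_apply).symm

lemma telescope : ∀ (m : ℕ) (x y : Fin m → ℝ),
    ∏ j, x j - ∏ j, y j
      = ∑ j, ∏ ℓ, (if ℓ < j then y ℓ else if ℓ = j then x ℓ - y ℓ else x ℓ) := by
  intro m
  induction m with
  | zero => intro x y; simp
  | succ n ih =>
    intro x y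
    rw [Fin.prod_univ_succ, Fin.prod_univ_succ, Fin.sum_univ_succ]
    have h0 : ∏ ℓ, (if ℓ < (0 : Fin (n+1)) then y ℓ else if ℓ = 0 then x ℓ - y ℓ else x ℓ)
        = (x 0 - y 0) * ∏ j : Fin n, x j.succ := by
      rw [Fin.prod_univ_succ]
      simp [Fin.succ_ne_zero]
    have hs : ∀ i : Fin n,
        (∏ ℓ, (if ℓ < i.succ then y ℓ else if ℓ = i.succ then x ℓ - y ℓ else x ℓ))
        = y 0 * ∏ ℓ : Fin n, (if ℓ < i then y ℓ.succ else if ℓ = i then x ℓ.succ - y ℓ.succ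
            else x ℓ.succ) := by
      intro i
      rw [Fin.prod_univ_succ]
      congr 1
      · simp [Fin.succ_pos]
    rw [h0, Finset.sum_congr rfl fun i _ => hs i, ← Finset.mul_sum,
      ← ih (fun j => x j.succ) (fun j => y j.succ)]
    ring

theorem stmt14 (m : ℕ) (C : ℝ) (hC : 1 ≤ C) :
    ∃ C' : ℝ, 0 < C' ∧
      ∀ (p r : Fin m → ℕ)
        (A Ahat : ∀ j, Matrix (Fin (p j)) (Fin (r j)) ℝ)
        (H : ∀ j, Matrix (Fin (r j)) (Fin (r j)) ℝ),
        (∀ j, frobNorm (H j) ≤ C) →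
        (∀ j, frob2 (A j) ≤ C * (p j : ℝ)) →
        (∀ j, frob2 (Ahat j) ≤ C * (p j : ℝ)) →
        (1 / ∏ j, (p j : ℝ)) *
            frob2 (kronFamily Ahat - kronFamily A * kronFamily H)
          ≤ C' * ∑ j, (1 / (p j : ℝ)) * frob2 (Ahat j - A j * H j) := by
  have hC0 : (0:ℝ) < C := lt_of_lt_of_le one_pos hC
  refine ⟨(m + 1) * C ^ (3 * m), by positivity, ?_⟩
  intro p r A Ahat H hH hA hAhat
  have hRHS : 0 ≤ ∑ j, (1 / (p j : ℝ)) * frob2 (Ahat j - A j * H j) :=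
    Finset.sum_nonneg fun j _ => mul_nonneg (by positivity) (frob2_nonneg _)
  by_cases hp0 : ∃ j, p j = 0
  · obtain ⟨j, hj⟩ := hp0
    have : ∏ j, (p j : ℝ) = 0 :=
      Finset.prod_eq_zero (Finset.mem_univ j) (by exact_mod_cast congrArg Nat.cast hj)
    rw [this]
    simp only [div_zero, zero_mul]
    positivity
  push_neg at hp0
  have hpj : ∀ j, (0:ℝ) < (p j : ℝ) := fun j => by
    have := Nat.pos_of_ne_zero (hp0 j); exact_mod_cast this
  set P : ℝ := ∏ j, (p j : ℝ) with hPdef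
  have hP : 0 < P := Finset.prod_pos fun j _ => hpj j
  -- frob2 of H
  have hH2 : ∀ j, frob2 (H j) ≤ C ^ 2 := by
    intro j
    have h1 : frob2 (H j) = (frobNorm (H j)) ^ 2 := by
      rw [frobNorm, Real.sq_sqrt (frob2_nonneg _)]
    rw [h1]
    exact pow_le_pow_left₀ (Real.sqrt_nonneg _) (hH j) 2
  -- the telescoping family
  set G : ∀ _ : Fin m, ∀ ℓ, Matrix (Fin (p ℓ)) (Fin (r ℓ)) ℝ :=
    fun j ℓ => if ℓ < j then A ℓ * H ℓ else if ℓ = j then Ahat ℓ - A ℓ * H ℓ else Ahat ℓ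
    with hGdef
  have key : ∀ (i : ∀ ℓ, Fin (p ℓ)) (c : ∀ ℓ, Fin (r ℓ)),
      (kronFamily Ahat - kronFamily A * kronFamily H) i c
        = ∑ j, kronFamily (G j) i c := by
    intro i c
    rw [kronFamily_mul]
    show (kronFamily Ahat i c) - (kronFamily (fun j => A j * H j) i c) = _
    unfold kronFamily
    simp only [Matrix.of_apply]
    rw [telescope m (fun ℓ => Ahat ℓ (i ℓ) (c ℓ)) (fun ℓ => (A ℓ * H ℓ) (i ℓ) (c ℓ))]
    refine Finset.sum_congr rfl fun j _ => Finset.prod_congr rfl fun ℓ _ => ?_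
    simp only [hGdef]
    split_ifs <;> simp [Matrix.sub_apply]
  -- frob2 bound via Cauchy-Schwarz
  have hb : frob2 (kronFamily Ahat - kronFamily A * kronFamily H)
      ≤ (m : ℝ) * ∑ j, frob2 (kronFamily (G j)) := by
    unfold frob2
    calc ∑ i, ∑ c, ((kronFamily Ahat - kronFamily A * kronFamily H) i c) ^ 2
        ≤ ∑ i, ∑ c, (m : ℝ) * ∑ j, (kronFamily (G j) i c) ^ 2 := by
          refine Finset.sum_le_sum fun i _ => Finset.sum_le_sum fun c _ => ?_
          rw [key i c]
          have := sq_sum_le_card_mul_sum_sq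
            (s := (Finset.univ : Finset (Fin m))) (f := fun j => kronFamily (G j) i c)
          simpa using this
      _ = (m : ℝ) * ∑ j, ∑ i, ∑ c, (kronFamily (G j) i c) ^ 2 := by
          simp_rw [← Finset.mul_sum]
          congr 1
          rw [Finset.sum_congr rfl fun i _ => Finset.sum_comm, Finset.sum_comm]
  -- bound each kron factor
  have hGb : ∀ j, frob2 (kronFamily (G j))
      ≤ frob2 (Ahat j - A j * H j) * (C ^ (3 * m) * ∏ ℓ ∈ Finset.univ.erase j, (p ℓ : ℝ)) := by
    intro j
    rw [frob2_kronFamily]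
    have hfac : ∀ ℓ, frob2 (G j ℓ)
        ≤ (if ℓ = j then frob2 (Ahat j - A j * H j) else C ^ 3 * (p ℓ : ℝ)) := by
      intro ℓ
      simp only [hGdef]
      by_cases h1 : ℓ < j
      · have h2 : ℓ ≠ j := ne_of_lt h1
        simp only [h1, if_true, h2, if_false]
        calc frob2 (A ℓ * H ℓ) ≤ frob2 (A ℓ) * frob2 (H ℓ) := frob2_mul_le _ _
          _ ≤ (C * (p ℓ : ℝ)) * C ^ 2 :=
              mul_le_mul (hA ℓ) (hH2 ℓ) (frob2_nonneg _) (by positivity)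
          _ = C ^ 3 * (p ℓ : ℝ) := by ring
      · by_cases h2 : ℓ = j
        · subst h2; simp [h1]
        · simp only [h1, if_false, h2]
          calc frob2 (Ahat ℓ) ≤ C * (p ℓ : ℝ) := hAhat ℓ
            _ ≤ C ^ 3 * (p ℓ : ℝ) :=
              mul_le_mul_of_nonneg_right (le_self_pow₀ hC (by norm_num)) (hpj ℓ).le
    calc ∏ ℓ, frob2 (G j ℓ)
        ≤ ∏ ℓ, (if ℓ = j then frob2 (Ahat j - A j * H j) else C ^ 3 * (p ℓ : ℝ)) :=
          Finset.prod_le_prod (fun ℓ _ => frob2_nonneg _) (fun ℓ _ => hfac ℓ)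
      _ = frob2 (Ahat j - A j * H j) * ∏ ℓ ∈ Finset.univ.erase j, (C ^ 3 * (p ℓ : ℝ)) := by
          rw [← Finset.mul_prod_erase _ _ (Finset.mem_univ j)]
          simp only [if_pos rfl]
          congr 1
          exact Finset.prod_congr rfl fun ℓ hℓ => by
            rw [if_neg (Finset.ne_of_mem_erase hℓ)]
      _ ≤ frob2 (Ahat j - A j * H j) * (C ^ (3 * m) * ∏ ℓ ∈ Finset.univ.erase j, (p ℓ : ℝ)) := by
          refine mul_le_mul_of_nonneg_left ?_ (frob2_nonneg _)
          rw [Finset.prod_mul_distrib, Finset.prod_const]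
          refine mul_le_mul_of_nonneg_right ?_
            (Finset.prod_nonneg fun ℓ _ => (hpj ℓ).le)
          rw [← pow_mul]
          refine pow_le_pow_right₀ hC ?_
          have : (Finset.univ.erase j).card ≤ m := by
            simpa using Finset.card_erase_le (s := (Finset.univ : Finset (Fin m))) (a := j)
          omega
  -- combine
  have hQ : ∀ j, (1 / P) * ∏ ℓ ∈ Finset.univ.erase j, (p ℓ : ℝ) = 1 / (p j : ℝ) := by
    intro j
    have hPsplit : P = (p j : ℝ) * ∏ ℓ ∈ Finset.univ.erase j, (p ℓ : ℝ) :=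
      (Finset.mul_prod_erase _ _ (Finset.mem_univ j)).symm
    have hQpos : 0 < ∏ ℓ ∈ Finset.univ.erase j, (p ℓ : ℝ) :=
      Finset.prod_pos fun ℓ _ => hpj ℓ
    rw [hPsplit, div_mul_eq_mul_div, one_mul, mul_comm ((p j : ℝ)), ← div_div,
      div_self hQpos.ne']
  calc (1 / P) * frob2 (kronFamily Ahat - kronFamily A * kronFamily H)
      ≤ (1 / P) * ((m : ℝ) * ∑ j, frob2 (kronFamily (G j))) :=
        mul_le_mul_of_nonneg_left hb (by positivity)
    _ ≤ (1 / P) * ((m : ℝ) * ∑ j, frob2 (Ahat j - A j * H j)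
          * (C ^ (3 * m) * ∏ ℓ ∈ Finset.univ.erase j, (p ℓ : ℝ))) := by
        refine mul_le_mul_of_nonneg_left (mul_le_mul_of_nonneg_left
          (Finset.sum_le_sum fun j _ => hGb j) (Nat.cast_nonneg m)) (by positivity)
    _ = (m : ℝ) * C ^ (3 * m) * ∑ j, (1 / (p j : ℝ)) * frob2 (Ahat j - A j * H j) := by
        simp_rw [Finset.mul_sum]
        refine Finset.sum_congr rfl fun j _ => ?_
        rw [← hQ j]
        ring
    _ ≤ (m + 1) * C ^ (3 * m) * ∑ j, (1 / (p j : ℝ)) * frob2 (Ahat j - A j * H j) := by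
        refine mul_le_mul_of_nonneg_right (mul_le_mul_of_nonneg_right ?_ (by positivity)) hRHS
        linarith [Nat.cast_nonneg (α := ℝ) m]
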